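/- The equation (H1): (x−y)(u−v) + β − α = 0 is three-dimensionally consistent with the tetrahedron property, and the consistent value is x123 = ((α1−α2)x1x2 + (α2−α3)x2x3 + (α3−α1)x3x1)/((α3−α2)x1 + (α1−α3)x2 + (α2−α1)x3). -/
import Mathlib


/-- Equation (H1): `(x−y)(u−v) + β − α = 0` is three-dimensionally consistent
with the tetrahedron property: the three determinations `y1, y2, y3` of `x123`
from the three faces adjacent to `x123` coincide and equal
`((α1−α2)x1x2 + (α2−α3)x2x3 + (α3−α1)x3x1)/((α3−α2)x1 + (α1−α3)x2 + (α2−α1)x3)`,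
which does not involve `x`. -/
theorem H1_three_dimensional_consistency
    (x x1 x2 x3 x12 x23 x31 y1 y2 y3 α1 α2 α3 : ℂ)
    (h12ne : α1 ≠ α2) (h23ne : α2 ≠ α3) (h31ne : α3 ≠ α1)
    -- (H1) on the three faces adjacent to `x`
    (h12 : (x - x12) * (x1 - x2) + α2 - α1 = 0)
    (h23 : (x - x23) * (x2 - x3) + α3 - α2 = 0)
    (h31 : (x - x31) * (x3 - x1) + α1 - α3 = 0)
    -- (H1) on the three faces adjacent to `x123`
    (hf1 : (x1 - y1) * (x12 - x31) + α3 - α2 = 0)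
    (hf2 : (x2 - y2) * (x23 - x12) + α1 - α3 = 0)
    (hf3 : (x3 - y3) * (x31 - x23) + α2 - α1 = 0)
    (hD : (α3 - α2) * x1 + (α1 - α3) * x2 + (α2 - α1) * x3 ≠ 0) :
    y1 = ((α1 - α2) * x1 * x2 + (α2 - α3) * x2 * x3 + (α3 - α1) * x3 * x1) /
        ((α3 - α2) * x1 + (α1 - α3) * x2 + (α2 - α1) * x3) ∧
    y2 = ((α1 - α2) * x1 * x2 + (α2 - α3) * x2 * x3 + (α3 - α1) * x3 * x1) /
        ((α3 - α2) * x1 + (α1 - α3) * x2 + (α2 - α1) * x3) ∧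
    y3 = ((α1 - α2) * x1 * x2 + (α2 - α3) * x2 * x3 + (α3 - α1) * x3 * x1) /
        ((α3 - α2) * x1 + (α1 - α3) * x2 + (α2 - α1) * x3) := by
  set D := (α3 - α2) * x1 + (α1 - α3) * x2 + (α2 - α1) * x3 with hDdef
  have hne1 : x12 - x31 ≠ 0 := fun h => h23ne (by linear_combination (x1 - y1) * h - hf1)
  have hne2 : x23 - x12 ≠ 0 := fun h => h31ne (by linear_combination (x2 - y2) * h - hf2)
  have hne3 : x31 - x23 ≠ 0 := fun h => h12ne (by linear_combination (x3 - y3) * h - hf3)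
  refine ⟨?_, ?_, ?_⟩
  · rw [eq_div_iff hD]
    apply mul_right_cancel₀ hne1
    linear_combination (-D) * hf1 - (α3 - α2) * (x1 - x3) * h12 - (α3 - α2) * (x1 - x2) * h31
  · rw [eq_div_iff hD]
    apply mul_right_cancel₀ hne2
    linear_combination (-D) * hf2 - (α1 - α3) * (x2 - x1) * h23 - (α1 - α3) * (x2 - x3) * h12
  · rw [eq_div_iff hD]
    apply mul_right_cancel₀ hne3
    linear_combination (-D) * hf3 - (α2 - α1) * (x3 - x2) * h31 - (α2 - α1) * (x3 - x1) * h23
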